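/- For every integer n ≥ 1, the graph G_n = (V_n, E_n) is a Hamilton path of G_{≤n} = (V_n, E_1 ∪ ... ∪ E_n) with endpoints 0 and 1. -/

import Mathlib

open SimpleGraph

/-- The `n`-th vertex level of the whirl graph: `V_n = {i/3^n : 0 ≤ i ≤ 3^n}`. -/
def Vn (n : ℕ) : Set ℚ := {q | ∃ i : ℕ, i ≤ 3 ^ n ∧ q = (i : ℚ) / 3 ^ n}

/-- The `n`-th edge level of the whirl graph. -/
def En (n : ℕ) : Set (Sym2 ℚ) :=
  {e | ∃ k : ℕ, k < 3 ^ (n - 1) ∧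
    (e = s(((3 * k : ℕ) : ℚ) / 3 ^ n, ((3 * k + 2 : ℕ) : ℚ) / 3 ^ n) ∨
     e = s(((3 * k + 1 : ℕ) : ℚ) / 3 ^ n, ((3 * k + 2 : ℕ) : ℚ) / 3 ^ n) ∨
     e = s(((3 * k + 1 : ℕ) : ℚ) / 3 ^ n, ((3 * k + 3 : ℕ) : ℚ) / 3 ^ n))}

/-- The vertex set `V = ⋃_{n ≥ 1} V_n` of the whirl graph. -/
def whirlV : Set ℚ := ⋃ n ≥ 1, Vn n

/-- The whirl graph `G`, as a simple graph on `ℚ` with edge set `⋃_{n ≥ 1} E_n`. -/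
def whirl : SimpleGraph ℚ := fromEdgeSet (⋃ n ≥ 1, En n)

/-- `G_{≤ n} = (V_n, E_1 ∪ ⋯ ∪ E_n)`. -/
def Gle (n : ℕ) : SimpleGraph ℚ := fromEdgeSet (⋃ k ∈ Set.Icc 1 n, En k)

/-- `G_{≥ n} = (V, ⋃_{k ≥ n} E_k)`. -/
def Gge (n : ℕ) : SimpleGraph ℚ := fromEdgeSet (⋃ k ≥ n, En k)

/-- Two walks are edge-disjoint if they share no edge. -/
def WalkEdgeDisjoint {V : Type*} {G : SimpleGraph V} {u v : V}
    (p q : G.Walk u v) : Prop :=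
  ∀ e, e ∈ p.edges → e ∉ q.edges

/-- Two lists (of supports of paths) traverse their common entries in the same order. -/
def ListCompat {α : Type*} [DecidableEq α] (l₁ l₂ : List α) : Prop :=
  ∀ x y, x ∈ l₁ → y ∈ l₁ → x ∈ l₂ → y ∈ l₂ →
    (l₁.idxOf x ≤ l₁.idxOf y ↔ l₂.idxOf x ≤ l₂.idxOf y)

/-- For `n ≥ 1`, the graph `G_n = (V_n, E_n)` is a Hamilton path of `G_{≤n}` with
endpoints `0` and `1`: there is a `0`–`1` path in `G_{≤n}` whose edges are exactly `E_n`
and whose vertices are exactly `V_n`. -/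
lemma q_inj (n i j : ℕ) : (i : ℚ) / 3 ^ n = (j : ℚ) / 3 ^ n ↔ i = j := by
  constructor
  · intro h
    field_simp at h
    exact_mod_cast h
  · rintro rfl; rfl

lemma mem_edgeset (n : ℕ) (hn : 1 ≤ n) {e : Sym2 ℚ} (he : e ∈ En n) :
    e ∈ ⋃ k ∈ Set.Icc 1 n, En k :=
  Set.mem_biUnion (Set.mem_Icc.2 ⟨hn, le_rfl⟩) he

lemma adj1 (n k : ℕ) (hn : 1 ≤ n) (hk : k < 3 ^ (n - 1)) :
    (Gle n).Adj (((3 * k : ℕ) : ℚ) / 3 ^ n) (((3 * k + 2 : ℕ) : ℚ) / 3 ^ n) := by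
  rw [Gle, fromEdgeSet_adj]
  exact ⟨mem_edgeset n hn ⟨k, hk, Or.inl rfl⟩, by rw [Ne, q_inj]; omega⟩

lemma adj2 (n k : ℕ) (hn : 1 ≤ n) (hk : k < 3 ^ (n - 1)) :
    (Gle n).Adj (((3 * k + 1 : ℕ) : ℚ) / 3 ^ n) (((3 * k + 2 : ℕ) : ℚ) / 3 ^ n) := by
  rw [Gle, fromEdgeSet_adj]
  exact ⟨mem_edgeset n hn ⟨k, hk, Or.inr (Or.inl rfl)⟩, by rw [Ne, q_inj]; omega⟩

lemma adj3 (n k : ℕ) (hn : 1 ≤ n) (hk : k < 3 ^ (n - 1)) :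
    (Gle n).Adj (((3 * k + 1 : ℕ) : ℚ) / 3 ^ n) (((3 * k + 3 : ℕ) : ℚ) / 3 ^ n) := by
  rw [Gle, fromEdgeSet_adj]
  exact ⟨mem_edgeset n hn ⟨k, hk, Or.inr (Or.inr rfl)⟩, by rw [Ne, q_inj]; omega⟩

lemma aux (n : ℕ) (hn : 1 ≤ n) :
    ∀ m : ℕ, m ≤ 3 ^ (n - 1) →
    ∃ P : (Gle n).Walk (((0 : ℕ) : ℚ) / 3 ^ n) (((3 * m : ℕ) : ℚ) / 3 ^ n),
      P.IsPath ∧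
      (∀ e, e ∈ P.edges ↔ ∃ k : ℕ, k < m ∧
        (e = s(((3 * k : ℕ) : ℚ) / 3 ^ n, ((3 * k + 2 : ℕ) : ℚ) / 3 ^ n) ∨
         e = s(((3 * k + 1 : ℕ) : ℚ) / 3 ^ n, ((3 * k + 2 : ℕ) : ℚ) / 3 ^ n) ∨
         e = s(((3 * k + 1 : ℕ) : ℚ) / 3 ^ n, ((3 * k + 3 : ℕ) : ℚ) / 3 ^ n))) ∧
      (∀ x, x ∈ P.support ↔ ∃ i : ℕ, i ≤ 3 * m ∧ x = (i : ℚ) / 3 ^ n) := by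
  intro m
  induction m with
  | zero =>
    intro _
    exact ⟨Walk.nil, Walk.IsPath.nil, by simp, by simp⟩
  | succ m ih =>
    intro hm
    obtain ⟨P, hP, hPe, hPs⟩ := ih (by omega)
    have hk : m < 3 ^ (n - 1) := by omega
    have h3 : (((3 * (m + 1) : ℕ) : ℚ) / 3 ^ n) = (((3 * m + 3 : ℕ) : ℚ) / 3 ^ n) := by
      rw [q_inj]; ring
    let B : (Gle n).Walk (((3 * m : ℕ) : ℚ) / 3 ^ n) (((3 * m + 3 : ℕ) : ℚ) / 3 ^ n) :=
      Walk.cons (adj1 n m hn hk) (Walk.cons (adj2 n m hn hk).symm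
        (Walk.cons (adj3 n m hn hk) Walk.nil))
    have hBsupp : B.support.tail = [(((3 * m + 2 : ℕ) : ℚ) / 3 ^ n),
        (((3 * m + 1 : ℕ) : ℚ) / 3 ^ n), (((3 * m + 3 : ℕ) : ℚ) / 3 ^ n)] := rfl
    have hBedges : B.edges = [s((((3 * m : ℕ) : ℚ) / 3 ^ n), (((3 * m + 2 : ℕ) : ℚ) / 3 ^ n)),
        s((((3 * m + 2 : ℕ) : ℚ) / 3 ^ n), (((3 * m + 1 : ℕ) : ℚ) / 3 ^ n)),
        s((((3 * m + 1 : ℕ) : ℚ) / 3 ^ n), (((3 * m + 3 : ℕ) : ℚ) / 3 ^ n))] := rfl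
    refine ⟨(P.append B).copy rfl h3.symm, ?_, ?_, ?_⟩
    · rw [Walk.isPath_def, Walk.support_copy, Walk.support_append]
      refine List.Nodup.append ((Walk.isPath_def _).1 hP) ?_ ?_
      · rw [hBsupp]
        simp only [List.nodup_cons, List.mem_cons, List.not_mem_nil, List.nodup_nil,
          List.mem_singleton, or_false, q_inj]
        refine ⟨by omega, by omega, not_false, trivial⟩
      · intro x hx hx'
        rw [hPs] at hx
        obtain ⟨i, hi, rfl⟩ := hx
        rw [hBsupp] at hx'
        simp only [List.mem_cons, List.not_mem_nil, or_false, q_inj] at hx'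
        omega
    · intro e
      rw [Walk.edges_copy, Walk.edges_append, List.mem_append, hPe, hBedges]
      simp only [List.mem_cons, List.not_mem_nil, or_false]
      constructor
      · rintro (⟨k, hk', h⟩ | h | h | h)
        · exact ⟨k, by omega, h⟩
        · exact ⟨m, by omega, Or.inl h⟩
        · exact ⟨m, by omega, Or.inr (Or.inl (h.trans (Sym2.eq_swap)))⟩
        · exact ⟨m, by omega, Or.inr (Or.inr h)⟩
      · rintro ⟨k, hk', h⟩
        rcases Nat.lt_or_ge k m with hkm | hkm
        · exact Or.inl ⟨k, hkm, h⟩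
        · have : k = m := by omega
          subst this
          rcases h with h | h | h
          · exact Or.inr (Or.inl h)
          · exact Or.inr (Or.inr (Or.inl (h.trans Sym2.eq_swap)))
          · exact Or.inr (Or.inr (Or.inr h))
    · intro x
      rw [Walk.support_copy, Walk.support_append, List.mem_append, hPs, hBsupp]
      simp only [List.mem_cons, List.not_mem_nil, or_false]
      constructor
      · rintro (⟨i, hi, rfl⟩ | h | h | h)
        · exact ⟨i, by omega, rfl⟩
        · exact ⟨3 * m + 2, by omega, h⟩
        · exact ⟨3 * m + 1, by omega, h⟩
        · exact ⟨3 * m + 3, by omega, h⟩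
      · rintro ⟨i, hi, rfl⟩
        rcases Nat.lt_or_ge (3 * m) i with him | him
        · have : i = 3 * m + 1 ∨ i = 3 * m + 2 ∨ i = 3 * m + 3 := by omega
          rcases this with rfl | rfl | rfl
          · exact Or.inr (Or.inr (Or.inl rfl))
          · exact Or.inr (Or.inl rfl)
          · exact Or.inr (Or.inr (Or.inr rfl))
        · exact Or.inl ⟨i, him, rfl⟩

theorem stmt4 (n : ℕ) (hn : 1 ≤ n) :
    ∃ P : (Gle n).Walk 0 1, P.IsPath ∧
      (∀ e, e ∈ P.edges ↔ e ∈ En n) ∧ (∀ x, x ∈ P.support ↔ x ∈ Vn n) := by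
  obtain ⟨P, hP, hPe, hPs⟩ := aux n hn (3 ^ (n - 1)) le_rfl
  have h33 : 3 * 3 ^ (n - 1) = 3 ^ n := by
    rw [← pow_succ']
    congr 1
    omega
  have h0 : (((0 : ℕ) : ℚ) / 3 ^ n) = 0 := by simp
  have h1 : (((3 * 3 ^ (n - 1) : ℕ) : ℚ) / 3 ^ n) = 1 := by
    rw [h33]
    push_cast
    rw [div_self (by positivity)]
  refine ⟨P.copy h0 h1, (Walk.isPath_def _).2 (by rw [Walk.support_copy]; exact (Walk.isPath_def _).1 hP), ?_, ?_⟩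
  · intro e
    rw [Walk.edges_copy, hPe]
    rfl
  · intro x
    rw [Walk.support_copy, hPs]
    constructor
    · rintro ⟨i, hi, rfl⟩
      exact ⟨i, by omega, rfl⟩
    · rintro ⟨i, hi, rfl⟩
      exact ⟨i, by omega, rfl⟩
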